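/- Let M be a model of T_cas. For each A ⊆ P^M, let p_A be the set of formulas {I(x)} ∪ {¬I_n(x) : n < ω} ∪ {x ≠ b : b ∈ I^M} ∪ {R(a,x) : a ∈ A} ∪ {¬R(a,x) : a ∈ P^M \ A}. Then p_A is finitely satisfiable in M and has a unique extension to a complete 1-type over M, and this complete type is nonalgebraic. Moreover, every nonalgebraic complete 1-type over M containing I(x) and ¬I_n(x) for every n < ω is obtained this way from a unique A ⊆ P^M. -/

import Mathlib

open FirstOrder FirstOrder.Language

/-- Unary relation symbols of the Casanovas language: `P`, `I`, and `I_n` for `n < ω`. -/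
inductive CasRel1 : Type
  | P : CasRel1
  | I : CasRel1
  | In (n : ℕ) : CasRel1

/-- The Casanovas language: unary symbols `P`, `I`, `I_n (n < ω)` and a binary symbol `R`. -/
def Lcas : FirstOrder.Language :=
  ⟨fun _ => Empty, fun n => match n with
    | 1 => CasRel1
    | 2 => Unit
    | _ => Empty⟩

variable (M : Type u) [Lcas.Structure M]

/-- The interpretation of `P` in `M`. -/
def PM : Set M := {x | Structure.RelMap (L := Lcas) (n := 1) (CasRel1.P : Lcas.Relations 1) ![x]}

/-- The interpretation of `I` in `M`. -/
def IM : Set M := {x | Structure.RelMap (L := Lcas) (n := 1) (CasRel1.I : Lcas.Relations 1) ![x]}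

/-- The interpretation of `I_n` in `M`. -/
def InM (n : ℕ) : Set M := {x | Structure.RelMap (L := Lcas) (n := 1) (CasRel1.In n : Lcas.Relations 1) ![x]}

/-- The interpretation of `R` in `M`. -/
def RM (x y : M) : Prop := Structure.RelMap (L := Lcas) (n := 2) (Unit.unit : Lcas.Relations 2) ![x, y]

/-- `M` is a model of `T_cas`. -/
structure IsTcasModel : Prop where
  part : ∀ x : M, x ∈ PM M ↔ x ∉ IM M
  P_inf : (PM M).Infinite
  I_inf : (IM M).Infinite
  In_sub : ∀ n : ℕ, InM M n ⊆ IM M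
  In_inf : ∀ n : ℕ, (InM M n).Infinite
  In_disj : ∀ m n : ℕ, m ≠ n → Disjoint (InM M m) (InM M n)
  R_sub : ∀ x y : M, RM M x y → x ∈ PM M ∧ y ∈ IM M
  R_count : ∀ a ∈ PM M, ∀ n : ℕ, ∃ s : Finset M, s.card = n ∧
    ∀ b : M, b ∈ s ↔ b ∈ InM M n ∧ RM M a b
  ext_P : ∀ B₀ B₁ : Finset M, ↑B₀ ⊆ IM M → ↑B₁ ⊆ IM M → Disjoint B₀ B₁ →
    (∀ n : ℕ, ((B₁ : Set M) ∩ InM M n).ncard ≤ n) →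
    ∃ a ∈ PM M, (∀ b ∈ B₁, RM M a b) ∧ ∀ b ∈ B₀, ¬ RM M a b
  ext_I : ∀ A₀ A₁ : Finset M, ↑A₀ ⊆ PM M → ↑A₁ ⊆ PM M → Disjoint A₀ A₁ →
    ∃ b ∈ IM M, (∀ a ∈ A₁, RM M a b) ∧ ∀ a ∈ A₀, ¬ RM M a b

/-- The formula `P(x)`, with free variable `Sum.inr 0` and parameters from `M`. -/
def fP : Lcas.Formula (M ⊕ Fin 1) :=
  Relations.formula₁ (CasRel1.P : Lcas.Relations 1) (Term.var (Sum.inr 0))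

/-- The formula `I(x)`. -/
def fI : Lcas.Formula (M ⊕ Fin 1) :=
  Relations.formula₁ (CasRel1.I : Lcas.Relations 1) (Term.var (Sum.inr 0))

/-- The formula `I_n(x)`. -/
def fIn (n : ℕ) : Lcas.Formula (M ⊕ Fin 1) :=
  Relations.formula₁ (CasRel1.In n : Lcas.Relations 1) (Term.var (Sum.inr 0))

variable {M}

/-- The formula `R(a, x)`, for a parameter `a : M`. -/
def fRleft (a : M) : Lcas.Formula (M ⊕ Fin 1) :=
  Relations.formula₂ (Unit.unit : Lcas.Relations 2) (Term.var (Sum.inl a)) (Term.var (Sum.inr 0))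

/-- The formula `R(x, b)`, for a parameter `b : M`. -/
def fRright (b : M) : Lcas.Formula (M ⊕ Fin 1) :=
  Relations.formula₂ (Unit.unit : Lcas.Relations 2) (Term.var (Sum.inr 0)) (Term.var (Sum.inl b))

/-- The formula `x ≠ b`, for a parameter `b : M`. -/
def fNe (b : M) : Lcas.Formula (M ⊕ Fin 1) :=
  (Term.equal (Term.var (Sum.inr 0)) (Term.var (Sum.inl b))).not

variable (M)

/-- `a` realizes the formula `φ` (with parameters from `M` and one free variable). -/
def RealizesAt (φ : Lcas.Formula (M ⊕ Fin 1)) (a : M) : Prop :=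
  φ.Realize (Sum.elim id fun _ => a)

/-- Every finite subset of `p` is satisfiable in `M`. -/
def FinSatIn (p : Set (Lcas.Formula (M ⊕ Fin 1))) : Prop :=
  ∀ s : Finset (Lcas.Formula (M ⊕ Fin 1)), ↑s ⊆ p → ∃ a : M, ∀ φ ∈ s, RealizesAt M φ a

/-- `p` is a complete 1-type over `M`: a maximal finitely satisfiable set of formulas in one
free variable with parameters from `M`. -/
def IsCompleteTypeOver (p : Set (Lcas.Formula (M ⊕ Fin 1))) : Prop :=
  FinSatIn M p ∧ ∀ q : Set (Lcas.Formula (M ⊕ Fin 1)), FinSatIn M q → p ⊆ q → q = p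

/-- `p` is nonalgebraic: it contains `x ≠ b` for every `b : M`. -/
def IsNonalgebraic (p : Set (Lcas.Formula (M ⊕ Fin 1))) : Prop :=
  ∀ b : M, fNe b ∈ p


variable {M} in
/-- The partial type `p_A` over `M`, for `A ⊆ P^M`: it contains `I(x)`, `¬I_n(x)` for all
`n < ω`, `x ≠ b` for all `b ∈ I^M`, `R(a,x)` for `a ∈ A`, and `¬R(a,x)` for `a ∈ P^M \ A`. -/
def typeA (A : Set M) : Set (Lcas.Formula (M ⊕ Fin 1)) :=
  {fI M} ∪ {φ | ∃ n : ℕ, φ = (fIn M n).not} ∪ {φ | ∃ b ∈ IM M, φ = fNe b} ∪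
    {φ | ∃ a ∈ A, φ = fRleft a} ∪ {φ | ∃ a ∈ PM M \ A, φ = (fRleft a).not}

/-! ### Auxiliary development -/

namespace CasAux

attribute [local instance] Classical.propDecidable Classical.decEq

section Basics

variable {M : Type u} [Lcas.Structure M]

theorem term_eq_var {γ : Type w} (t : Lcas.Term γ) : ∃ g, t = Term.var g := by
  cases t with
  | var g => exact ⟨g, rfl⟩
  | func f ts => exact (show Empty from f).elim

variable (hM : IsTcasModel M)
include hM

theorem not_PM_of_IM {x : M} (hx : x ∈ IM M) : x ∉ PM M := fun hp => (hM.part x).mp hp hx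

theorem IM_of_not_PM {x : M} (hx : x ∉ PM M) : x ∈ IM M := by
  by_contra h; exact hx ((hM.part x).mpr h)

theorem not_IM_of_PM {x : M} (hx : x ∈ PM M) : x ∉ IM M := (hM.part x).mp hx

theorem notR_left {x y : M} (hx : x ∉ PM M) : ¬ RM M x y := fun hr => hx (hM.R_sub x y hr).1

theorem notR_right {x y : M} (hy : y ∉ IM M) : ¬ RM M x y := fun hr => hy (hM.R_sub x y hr).2

theorem PM_not_InM {x : M} (hx : x ∈ PM M) (n : ℕ) : x ∉ InM M n :=
  fun h => not_IM_of_PM hM hx (hM.In_sub n h)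

theorem IM_iff_not_PM {x : M} : x ∈ IM M ↔ x ∉ PM M :=
  ⟨fun h => not_PM_of_IM hM h, fun h => IM_of_not_PM hM h⟩

/-- The set of `R`-neighbors of `a` in `I_n`, as a `Finset`. -/
noncomputable def nbrs (a : M) (n : ℕ) : Finset M :=
  if h : a ∈ PM M then (hM.R_count a h n).choose else ∅

theorem nbrs_card {a : M} (ha : a ∈ PM M) (n : ℕ) : (nbrs hM a n).card = n := by
  rw [nbrs, dif_pos ha]; exact (hM.R_count a ha n).choose_spec.1

theorem mem_nbrs {a : M} (ha : a ∈ PM M) {n : ℕ} {b : M} :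
    b ∈ nbrs hM a n ↔ b ∈ InM M n ∧ RM M a b := by
  rw [nbrs, dif_pos ha]; exact (hM.R_count a ha n).choose_spec.2 b

theorem InM_eq_of_mem {b : M} {m n : ℕ} (hm : b ∈ InM M m) (hn : b ∈ InM M n) : m = n := by
  by_contra h
  exact (Set.disjoint_left.mp (hM.In_disj m n h)) hm hn

theorem not_InM_zero {a b : M} (ha : a ∈ PM M) (hr : RM M a b) : b ∉ InM M 0 := by
  intro h0
  have := (mem_nbrs hM ha).mpr ⟨h0, hr⟩
  have hc := nbrs_card hM ha 0
  rw [Finset.card_eq_zero] at hc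
  rw [hc] at this
  exact absurd this (Finset.notMem_empty b)

end Basics

/-! ### Realization lemmas for the basic formulas -/

section RealizeLemmas

variable {M : Type u} [Lcas.Structure M]

theorem realizesAt_fI {a : M} : RealizesAt M (fI M) a ↔ a ∈ IM M := by
  simp [RealizesAt, fI, IM]
  exact Formula.realize_rel₁

theorem realizesAt_fP {a : M} : RealizesAt M (fP M) a ↔ a ∈ PM M := by
  simp [RealizesAt, fP, PM]
  exact Formula.realize_rel₁

theorem realizesAt_fIn {a : M} {n : ℕ} : RealizesAt M (fIn M n) a ↔ a ∈ InM M n := by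
  simp [RealizesAt, fIn, InM]
  exact Formula.realize_rel₁

theorem realizesAt_not {a : M} {φ : Lcas.Formula (M ⊕ Fin 1)} :
    RealizesAt M φ.not a ↔ ¬ RealizesAt M φ a := by
  simp [RealizesAt]

theorem realizesAt_fNe {a b : M} : RealizesAt M (fNe b) a ↔ a ≠ b := by
  simp only [RealizesAt, fNe, Formula.realize_not, Formula.realize_equal]
  simp

theorem realizesAt_fRleft {a c : M} : RealizesAt M (fRleft c) a ↔ RM M c a := by
  have : (Formula.Realize (M := M) (fRleft c) (Sum.elim id fun _ => a)) ↔
      Structure.RelMap (L := Lcas) (n := 2) (Unit.unit : Lcas.Relations 2) ![c, a] := by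
    rw [fRleft]
    exact Formula.realize_rel₂
  exact this

end RealizeLemmas

end CasAux


namespace CasAux

attribute [local instance] Classical.propDecidable Classical.decEq

section Key

variable {M : Type u} [Lcas.Structure M] (hM : IsTcasModel M)
include hM

theorem ncard_singleton_inter_le {d : M} {n : ℕ} (h : n = 0 → d ∉ InM M 0) :
    (({d} : Set M) ∩ InM M n).ncard ≤ n := by
  cases n with
  | zero =>
    have he : ({d} : Set M) ∩ InM M 0 = ∅ := by
      apply Set.eq_empty_iff_forall_notMem.mpr
      rintro x ⟨hx1, hx2⟩
      rw [Set.mem_singleton_iff] at hx1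
      exact h rfl (hx1 ▸ hx2)
    rw [he, Set.ncard_empty]
  | succ k =>
    have h1 : (({d} : Set M) ∩ InM M (k+1)).ncard ≤ ({d} : Set M).ncard :=
      Set.ncard_le_ncard Set.inter_subset_left (Set.finite_singleton d)
    rw [Set.ncard_singleton] at h1
    omega

/-- Key extension lemma on the `I` side, with avoidance of finitely many `I_n`'s and
finitely many points. -/
theorem key (A₀ A₁ : Finset M) (h₀ : ↑A₀ ⊆ PM M) (h₁ : ↑A₁ ⊆ PM M)
    (hdisj : Disjoint A₀ A₁) (N : Finset ℕ) (F : Finset M) :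
    ∃ b, b ∈ IM M ∧ (∀ n ∈ N, b ∉ InM M n) ∧ b ∉ F ∧
      (∀ a ∈ A₁, RM M a b) ∧ (∀ a ∈ A₀, ¬ RM M a b) := by
  rcases A₁.eq_empty_or_nonempty with hA1 | ⟨a₀, ha₀⟩
  · -- no positive requirements: take a fresh element of a big `I_m`
    have hmN : N.sup id + 1 ∉ N := by
      intro h
      have h2 : id (N.sup id + 1) ≤ N.sup id := Finset.le_sup h
      simp only [id] at h2
      omega
    set m := N.sup id + 1 with hm
    have hT : ((↑F ∪ ⋃ a ∈ (A₀ : Set M), (↑(nbrs hM a m) : Set M)) : Set M).Finite :=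
      Set.Finite.union F.finite_toSet
        (Set.Finite.biUnion A₀.finite_toSet fun a _ => (nbrs hM a m).finite_toSet)
    obtain ⟨b, hb⟩ := ((hM.In_inf m).diff hT).nonempty
    obtain ⟨hbm, hbT⟩ := hb
    rw [Set.mem_union, not_or] at hbT
    refine ⟨b, hM.In_sub m hbm, ?_, ?_, ?_, ?_⟩
    · intro n hn hbn
      exact (Set.disjoint_left.mp (hM.In_disj m n (fun h => hmN (h ▸ hn)))) hbm hbn
    · intro hbF; exact hbT.1 hbF
    · intro a ha; rw [hA1] at ha; exact absurd ha (Finset.notMem_empty a)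
    · intro a ha hr
      apply hbT.2
      apply Set.mem_biUnion (Finset.mem_coe.mpr ha)
      exact Finset.mem_coe.mpr ((mem_nbrs hM (h₀ ha)).mpr ⟨hbm, hr⟩)
  · -- positive requirement: counting + distinguishing witnesses
    have ha₀P : a₀ ∈ PM M := h₁ ha₀
    set Fstar : Finset M := F ∪ N.biUnion (fun n => nbrs hM a₀ n) with hFstar
    -- a base realization of the pattern
    obtain ⟨b₁, hb₁I, hb₁1, hb₁0⟩ := hM.ext_I A₀ A₁ h₀ h₁ hdisj
    -- a fresh element `d` of `I_1` not related to anything in `A₀`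
    have hTd : ((↑(A₀.biUnion fun a => nbrs hM a 1) ∪ ({b₁} ∪ ↑Fstar)) : Set M).Finite :=
      Set.Finite.union (A₀.biUnion fun a => nbrs hM a 1).finite_toSet
        (Set.Finite.union (Set.finite_singleton b₁) Fstar.finite_toSet)
    obtain ⟨d, hd⟩ := ((hM.In_inf 1).diff hTd).nonempty
    obtain ⟨hd1, hdT⟩ := hd
    rw [Set.mem_union, not_or, Set.mem_union, not_or] at hdT
    obtain ⟨hdA₀, hdb₁, hdF⟩ := hdT
    have hdb₁' : d ≠ b₁ := by simpa using hdb₁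
    have hdF' : d ∉ Fstar := by simpa using hdF
    have hdI : d ∈ IM M := hM.In_sub 1 hd1
    have hdA₀' : ∀ a ∈ A₀, ¬ RM M a d := by
      intro a ha hr
      apply hdA₀
      exact Finset.mem_coe.mpr
        (Finset.mem_biUnion.mpr ⟨a, ha, (mem_nbrs hM (h₀ ha)).mpr ⟨hd1, hr⟩⟩)
    have hd0 : d ∉ InM M 0 := fun h =>
      (Set.disjoint_left.mp (hM.In_disj 1 0 one_ne_zero)) hd1 h
    -- `a*` with `R a* d` and `¬ R a* b₁`
    obtain ⟨astar, hastarP, hastar1, hastar0⟩ := hM.ext_P {b₁} {d}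
      (by simpa using hb₁I) (by simpa using hdI)
      (Finset.disjoint_singleton.mpr (fun h => hdb₁' h.symm))
      (by
        intro n
        rw [Finset.coe_singleton]
        exact ncard_singleton_inter_le hM (fun _ => hd0))
    have hRad : RM M astar d := hastar1 d (Finset.mem_singleton_self d)
    have hnRab₁ : ¬ RM M astar b₁ := hastar0 b₁ (Finset.mem_singleton_self b₁)
    have hastarA₀ : astar ∉ A₀ := fun h => hdA₀' astar h hRad
    have hastarA₁ : astar ∉ A₁ := fun h => hnRab₁ (hb₁1 astar h)
    -- distinguishing witnesses for points of `Fstar`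
    set F' : Finset M := Fstar.filter (fun f => f ∈ IM M ∧ f ∉ InM M 0 ∧ f ≠ b₁) with hF'
    have hgex : ∀ f : M, ∃ a : M, f ∈ F' → a ∈ PM M ∧ RM M a f ∧ ¬ RM M a b₁ ∧ ¬ RM M a d := by
      intro f
      by_cases hf : f ∈ F'
      · rw [hF', Finset.mem_filter] at hf
        obtain ⟨hfF, hfI, hf0, hfb₁⟩ := hf
        have hfd : f ≠ d := fun h => hdF' (h ▸ hfF)
        have hsub0 : (({b₁, d} : Finset M) : Set M) ⊆ IM M := by
          intro x hx
          simp only [Finset.coe_insert, Finset.coe_singleton, Set.mem_insert_iff,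
            Set.mem_singleton_iff] at hx
          rcases hx with h | h
          · exact h ▸ hb₁I
          · exact h ▸ hdI
        have hsub1 : (({f} : Finset M) : Set M) ⊆ IM M := by simpa using hfI
        have hdisj2 : Disjoint ({b₁, d} : Finset M) ({f} : Finset M) := by
          rw [Finset.disjoint_singleton_right]
          intro hmem
          rw [Finset.mem_insert, Finset.mem_singleton] at hmem
          rcases hmem with h | h
          · exact hfb₁ h
          · exact hfd h
        obtain ⟨a, haP, ha1, ha0⟩ := hM.ext_P {b₁, d} {f} hsub0 hsub1 hdisj2
          (by
            intro n
            rw [Finset.coe_singleton]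
            exact ncard_singleton_inter_le hM (fun _ => hf0))
        refine ⟨a, fun _ => ⟨haP, ha1 f (Finset.mem_singleton_self f), ?_, ?_⟩⟩
        · exact ha0 b₁ (Finset.mem_insert_self b₁ {d})
        · exact ha0 d (Finset.mem_insert_of_mem (Finset.mem_singleton_self d))
      · exact ⟨b₁, fun h => absurd h hf⟩
    choose g hg using hgex
    -- final application of ext_I
    set A₀' : Finset M := A₀ ∪ F'.image g with hA₀'
    set A₁' : Finset M := A₁ ∪ {astar} with hA₁'
    have hsub₀' : (A₀' : Set M) ⊆ PM M := by
      intro x hx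
      rw [hA₀'] at hx
      simp only [Finset.coe_union, Set.mem_union, Finset.mem_coe, Finset.coe_image,
        Set.mem_image] at hx
      rcases hx with h | ⟨f, hf, rfl⟩
      · exact h₀ h
      · exact (hg f hf).1
    have hsub₁' : (A₁' : Set M) ⊆ PM M := by
      intro x hx
      rw [hA₁'] at hx
      simp only [Finset.coe_union, Set.mem_union, Finset.mem_coe, Finset.coe_singleton,
        Set.mem_singleton_iff] at hx
      rcases hx with h | h
      · exact h₁ h
      · exact h ▸ hastarP
    have hdisj' : Disjoint A₀' A₁' := by
      rw [Finset.disjoint_left]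
      intro x hx hx'
      rw [hA₀', Finset.mem_union] at hx
      rw [hA₁', Finset.mem_union, Finset.mem_singleton] at hx'
      rcases hx with h | h
      · rcases hx' with h' | h'
        · exact (Finset.disjoint_left.mp hdisj) h h'
        · exact hastarA₀ (h' ▸ h)
      · rw [Finset.mem_image] at h
        obtain ⟨f, hf, rfl⟩ := h
        rcases hx' with h' | h'
        · exact (hg f hf).2.2.1 (hb₁1 _ h')
        · exact (hg f hf).2.2.2 (h' ▸ hRad)
    obtain ⟨b, hbI, hb1, hb0⟩ := hM.ext_I A₀' A₁' hsub₀' hsub₁' hdisj'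
    have hRa₀b : RM M a₀ b := hb1 a₀ (by rw [hA₁']; exact Finset.mem_union_left _ ha₀)
    have hbn0 : b ∉ InM M 0 := not_InM_zero hM ha₀P hRa₀b
    have hRastarb : RM M astar b := by
      apply hb1 astar
      rw [hA₁']
      exact Finset.mem_union_right _ (Finset.mem_singleton_self astar)
    have hbb₁ : b ≠ b₁ := fun h => hnRab₁ (h ▸ hRastarb)
    have hbFstar : b ∉ Fstar := by
      intro hbF
      have hbF' : b ∈ F' := by
        rw [hF', Finset.mem_filter]
        exact ⟨hbF, hbI, hbn0, hbb₁⟩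
      have hgb : g b ∈ A₀' := by
        rw [hA₀']
        exact Finset.mem_union_right _ (Finset.mem_image_of_mem g hbF')
      exact hb0 (g b) hgb (hg b hbF').2.1
    refine ⟨b, hbI, ?_, ?_, ?_, ?_⟩
    · intro n hn hbn
      apply hbFstar
      rw [hFstar]
      refine Finset.mem_union_right _ (Finset.mem_biUnion.mpr ?_)
      exact ⟨n, hn, (mem_nbrs hM ha₀P).mpr ⟨hbn, hRa₀b⟩⟩
    · intro hbF
      exact hbFstar (by rw [hFstar]; exact Finset.mem_union_left _ hbF)
    · intro a ha
      exact hb1 a (by rw [hA₁']; exact Finset.mem_union_left _ ha)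
    · intro a ha
      exact hb0 a (by rw [hA₀']; exact Finset.mem_union_left _ ha)

end Key

end CasAux

namespace CasAux

attribute [local instance] Classical.propDecidable Classical.decEq

section KeyP

variable {M : Type u} [Lcas.Structure M] (hM : IsTcasModel M)
include hM

omit hM in
theorem ncard_coe_inter (B : Finset M) (X : Set M) :
    ((B : Set M) ∩ X).ncard = (B.filter (· ∈ X)).card := by
  rw [← Set.ncard_coe_finset]
  congr 1
  ext x
  simp [Finset.mem_filter]

/-- Key extension lemma on the `P` side, with avoidance of finitely many points and
exact control of the neighborhoods in `I_n` for `n < t`. -/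
theorem keyP (B₀ B₁ : Finset M) (h₀ : ↑B₀ ⊆ IM M) (h₁ : ↑B₁ ⊆ IM M)
    (hd : Disjoint B₀ B₁) (t : ℕ)
    (hex : ∀ n, n < t → (B₁.filter (· ∈ InM M n)).card = n)
    (hcard : ∀ n : ℕ, (B₁.filter (· ∈ InM M n)).card ≤ n) (F : Finset M) :
    ∃ a, a ∈ PM M ∧ a ∉ F ∧ (∀ b ∈ B₁, RM M a b) ∧ (∀ b ∈ B₀, ¬ RM M a b) ∧
      (∀ n, n < t → ∀ e ∈ InM M n, (RM M a e ↔ e ∈ B₁)) := by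
  classical
  set FP : Finset M := F.filter (· ∈ PM M) with hFP
  set m₀ : ℕ := t + B₁.card + 1 with hm₀
  -- distinguishing elements in big `I_n`'s
  have heex : ∀ x : {y // y ∈ FP}, ∃ z, z ∈ InM M (m₀ + 1 + (FP.equivFin x : ℕ)) ∧
      ¬ RM M (x : M) z ∧ z ∉ B₀ := by
    intro x
    have hxP : (x : M) ∈ PM M := (Finset.mem_filter.mp x.2).2
    set mx := m₀ + 1 + (FP.equivFin x : ℕ)
    have hfin : ((↑(nbrs hM (x : M) mx) ∪ ↑B₀ : Set M)).Finite :=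
      Set.Finite.union (nbrs hM (x : M) mx).finite_toSet B₀.finite_toSet
    obtain ⟨z, hz⟩ := ((hM.In_inf mx).diff hfin).nonempty
    obtain ⟨hz1, hz2⟩ := hz
    rw [Set.mem_union, not_or] at hz2
    refine ⟨z, hz1, ?_, by simpa using hz2.2⟩
    intro hr
    exact hz2.1 (Finset.mem_coe.mpr ((mem_nbrs hM hxP).mpr ⟨hz1, hr⟩))
  choose e he using heex
  set E : Finset M := FP.attach.image e with hE
  have hEmem : ∀ u ∈ E, ∃ x : {y // y ∈ FP}, u = e x := by
    intro u hu
    rw [hE, Finset.mem_image] at hu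
    obtain ⟨x, _, rfl⟩ := hu
    exact ⟨x, rfl⟩
  -- apply ext_P to B₀, B₁ ∪ E
  have hsub1 : ((B₁ ∪ E : Finset M) : Set M) ⊆ IM M := by
    intro u hu
    rw [Finset.coe_union, Set.mem_union] at hu
    rcases hu with h | h
    · exact h₁ h
    · obtain ⟨x, rfl⟩ := hEmem u h
      exact hM.In_sub _ (he x).1
  have hdisj1 : Disjoint B₀ (B₁ ∪ E) := by
    rw [Finset.disjoint_union_right]
    refine ⟨hd, ?_⟩
    rw [Finset.disjoint_right]
    intro u hu
    obtain ⟨x, rfl⟩ := hEmem u hu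
    exact (he x).2.2
  have hEn : ∀ (x : {y // y ∈ FP}) (n : ℕ), e x ∈ InM M n → n = m₀ + 1 + (FP.equivFin x : ℕ) := by
    intro x n hn
    exact InM_eq_of_mem hM hn (he x).1
  have hcard1 : ∀ n : ℕ, (((B₁ ∪ E : Finset M) : Set M) ∩ InM M n).ncard ≤ n := by
    intro n
    rw [ncard_coe_inter, Finset.filter_union]
    rcases lt_or_ge n (m₀ + 1) with hn | hn
    · have hEf : E.filter (· ∈ InM M n) = ∅ := by
        apply Finset.filter_eq_empty_iff.mpr
        intro u hu
        obtain ⟨x, rfl⟩ := hEmem u hu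
        intro hmem
        have := hEn x n hmem
        omega
      rw [hEf, Finset.union_empty]
      exact hcard n
    · have hc1 : (E.filter (· ∈ InM M n)).card ≤ 1 := by
        apply Finset.card_le_one.mpr
        intro u hu w hw
        rw [Finset.mem_filter] at hu hw
        obtain ⟨x, rfl⟩ := hEmem u hu.1
        obtain ⟨y, rfl⟩ := hEmem w hw.1
        have h1 := hEn x n hu.2
        have h2 := hEn y n hw.2
        have : FP.equivFin x = FP.equivFin y := by
          apply Fin.ext
          omega
        rw [FP.equivFin.injective this]
      calc (B₁.filter (· ∈ InM M n) ∪ E.filter (· ∈ InM M n)).card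
          ≤ (B₁.filter (· ∈ InM M n)).card + (E.filter (· ∈ InM M n)).card :=
            Finset.card_union_le _ _
        _ ≤ B₁.card + 1 := by
            have := Finset.card_filter_le B₁ (· ∈ InM M n)
            omega
        _ ≤ n := by omega
  obtain ⟨a, haP, ha1, ha0⟩ := hM.ext_P B₀ (B₁ ∪ E) h₀ hsub1 hdisj1 hcard1
  have haB₁ : ∀ b ∈ B₁, RM M a b := fun b hb => ha1 b (Finset.mem_union_left _ hb)
  have haF : a ∉ F := by
    intro haF
    by_cases haPM : a ∈ PM M
    · have haFP : a ∈ FP := by rw [hFP, Finset.mem_filter]; exact ⟨haF, haPM⟩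
      set x : {y // y ∈ FP} := ⟨a, haFP⟩ with hx
      have h1 : RM M a (e x) := ha1 (e x)
        (Finset.mem_union_right _ (by rw [hE]; exact Finset.mem_image_of_mem e (Finset.mem_attach _ x)))
      exact (he x).2.1 h1
    · exact haPM haP
  refine ⟨a, haP, haF, haB₁, fun b hb => ha0 b hb, ?_⟩
  -- exactness of neighborhoods below `t`
  intro n hn u hu
  have hSn := mem_nbrs hM haP (n := n) (b := u)
  have hsub : B₁.filter (· ∈ InM M n) ⊆ nbrs hM a n := by
    intro w hw
    rw [Finset.mem_filter] at hw
    exact (mem_nbrs hM haP).mpr ⟨hw.2, haB₁ w hw.1⟩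
  have heq : B₁.filter (· ∈ InM M n) = nbrs hM a n := by
    apply Finset.eq_of_subset_of_card_le hsub
    rw [nbrs_card hM haP, hex n hn]
  constructor
  · intro hr
    have : u ∈ nbrs hM a n := (mem_nbrs hM haP).mpr ⟨hu, hr⟩
    rw [← heq, Finset.mem_filter] at this
    exact this.1
  · intro hb
    have : u ∈ nbrs hM a n := by
      rw [← heq, Finset.mem_filter]
      exact ⟨hb, hu⟩
    exact ((mem_nbrs hM haP).mp this).2

end KeyP

end CasAux

namespace CasAux

attribute [local instance] Classical.propDecidable Classical.decEq

section InvDef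

variable {M : Type u} [Lcas.Structure M]

/-- The back-and-forth invariant between two configurations `w`, `w'` in `M`. -/
structure Inv (t : ℕ) {β : Type v} (w w' : β → M) : Prop where
  eqiff : ∀ i j, w i = w j ↔ w' i = w' j
  pmem : ∀ i, w i ∈ PM M ↔ w' i ∈ PM M
  avoid : ∀ i, w i ≠ w' i → ∀ n, n < t → w i ∉ InM M n ∧ w' i ∉ InM M n
  rel : ∀ i j, RM M (w i) (w j) ↔ RM M (w' i) (w' j)
  nbr : ∀ i, w i ≠ w' i → ∀ n, n < t → ∀ e, e ∈ InM M n → (RM M (w i) e ↔ RM M (w' i) e)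

theorem Inv.symm {t : ℕ} {β : Type v} {w w' : β → M} (h : Inv t w w') : Inv t w' w where
  eqiff i j := (h.eqiff i j).symm
  pmem i := (h.pmem i).symm
  avoid i hne n hn := ⟨(h.avoid i (Ne.symm hne) n hn).2, (h.avoid i (Ne.symm hne) n hn).1⟩
  rel i j := (h.rel i j).symm
  nbr i hne n hn e he := (h.nbr i (Ne.symm hne) n hn e he).symm

theorem Inv.comp {t : ℕ} {β : Type v} {γ : Type w} {w w' : β → M} (h : Inv t w w')
    (g : γ → β) : Inv t (w ∘ g) (w' ∘ g) where
  eqiff i j := h.eqiff (g i) (g j)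
  pmem i := h.pmem (g i)
  avoid i hne n hn := h.avoid (g i) hne n hn
  rel i j := h.rel (g i) (g j)
  nbr i hne n hn e he := h.nbr (g i) hne n hn e he

/-- extension of a configuration by one element -/
def extO {β : Type v} (w : β → M) (d : M) : Option β → M := fun o => o.elim d w

@[simp] theorem extO_none {β : Type v} (w : β → M) (d : M) : extO w d none = d := rfl

@[simp] theorem extO_some {β : Type v} (w : β → M) (d : M) (i : β) : extO w d (some i) = w i := rfl

end InvDef

section InvLemmas

variable {M : Type u} [Lcas.Structure M] (hM : IsTcasModel M)
include hM

theorem Inv.imem {t : ℕ} {β : Type v} {w w' : β → M} (h : Inv t w w') (i : β) :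
    w i ∈ IM M ↔ w' i ∈ IM M := by
  rw [IM_iff_not_PM hM, IM_iff_not_PM hM]
  exact not_congr (h.pmem i)

theorem Inv.inmem {t : ℕ} {β : Type v} {w w' : β → M} (h : Inv t w w') (i : β)
    {n : ℕ} (hn : n < t) : w i ∈ InM M n ↔ w' i ∈ InM M n := by
  by_cases hmv : w i = w' i
  · rw [hmv]
  · exact iff_of_false (h.avoid i hmv n hn).1 (h.avoid i hmv n hn).2

theorem Inv.unmoved_of_inm {t : ℕ} {β : Type v} {w w' : β → M} (h : Inv t w w') (i : β)
    {n : ℕ} (hn : n < t) (hmem : w i ∈ InM M n ∨ w' i ∈ InM M n) : w i = w' i := by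
  by_contra hmv
  rcases hmem with hm | hm
  · exact (h.avoid i hmv n hn).1 hm
  · exact (h.avoid i hmv n hn).2 hm

/-- The key extension property of the invariant: any single element added on one side can
be matched on the other side. -/
theorem ext_inv (t : ℕ) {β : Type v} {w w' : β → M} (Cf : Finset M)
    (hw : ∀ i, w i ∈ Cf) (hw' : ∀ i, w' i ∈ Cf) (hc : Cf.card + 1 < t)
    (hinv : Inv t w w') (d : M) :
    ∃ d', Inv t (extO w d) (extO w' d') := by
  by_cases hdr : ∃ j, w j = d
  · -- `d` is already in the configuration
    obtain ⟨j, rfl⟩ := hdr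
    refine ⟨w' j, ?_, ?_, ?_, ?_, ?_⟩
    · rintro (_ | i) (_ | k)
      · simp
      · simpa using hinv.eqiff j k
      · simpa using hinv.eqiff i j
      · simpa using hinv.eqiff i k
    · rintro (_ | i)
      · simpa using hinv.pmem j
      · simpa using hinv.pmem i
    · rintro (_ | i) hne n hn
      · simpa using hinv.avoid j (by simpa using hne) n hn
      · simpa using hinv.avoid i (by simpa using hne) n hn
    · rintro (_ | i) (_ | k)
      · simpa using hinv.rel j j
      · simpa using hinv.rel j k
      · simpa using hinv.rel i j
      · simpa using hinv.rel i k
    · rintro (_ | i) hne n hn e he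
      · simpa using hinv.nbr j (by simpa using hne) n hn e he
      · simpa using hinv.nbr i (by simpa using hne) n hn e he
  · push_neg at hdr
    by_cases hdP : d ∈ PM M
    · -- `d` is a fresh element of `P`
      set B₁ : Finset M := ((Finset.range t).biUnion (fun n => nbrs hM d n)) ∪
        Cf.filter (fun x => ∃ i, w' i = x ∧ w i ∈ IM M ∧ (∀ n, n < t → w i ∉ InM M n) ∧
          RM M d (w i)) with hB₁
      set B₀ : Finset M := Cf.filter (fun x => ∃ i, w' i = x ∧ w i ∈ IM M ∧
        (∀ n, n < t → w i ∉ InM M n) ∧ ¬ RM M d (w i)) with hB₀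
      have hB₁mem : ∀ x, x ∈ B₁ ↔ ((∃ n, n < t ∧ x ∈ nbrs hM d n) ∨
          (x ∈ Cf ∧ ∃ i, w' i = x ∧ w i ∈ IM M ∧ (∀ n, n < t → w i ∉ InM M n) ∧
            RM M d (w i))) := by
        intro x
        rw [hB₁, Finset.mem_union, Finset.mem_biUnion, Finset.mem_filter]
        constructor
        · rintro (⟨n, hn, hx⟩ | h)
          · exact Or.inl ⟨n, by simpa using Finset.mem_range.mp hn, hx⟩
          · exact Or.inr h
        · rintro (⟨n, hn, hx⟩ | h)
          · exact Or.inl ⟨n, Finset.mem_range.mpr hn, hx⟩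
          · exact Or.inr h
      have hB₀mem : ∀ x, x ∈ B₀ ↔ (x ∈ Cf ∧ ∃ i, w' i = x ∧ w i ∈ IM M ∧
          (∀ n, n < t → w i ∉ InM M n) ∧ ¬ RM M d (w i)) := by
        intro x; rw [hB₀, Finset.mem_filter]
      have hprimadd : ∀ i, (∀ n, n < t → w i ∉ InM M n) → (∀ n, n < t → w' i ∉ InM M n) :=
        fun i h n hn hmem => h n hn ((hinv.inmem hM i hn).mpr hmem)
      have h₁ : ↑B₁ ⊆ IM M := by
        intro x hx
        rw [Finset.mem_coe, hB₁mem] at hx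
        rcases hx with ⟨n, _, hx⟩ | ⟨_, i, rfl, hiI, _, _⟩
        · exact hM.In_sub n ((mem_nbrs hM hdP).mp hx).1
        · exact (hinv.imem hM i).mp hiI
      have h₀ : ↑B₀ ⊆ IM M := by
        intro x hx
        rw [Finset.mem_coe, hB₀mem] at hx
        obtain ⟨_, i, rfl, hiI, _, _⟩ := hx
        exact (hinv.imem hM i).mp hiI
      have hdisjB : Disjoint B₀ B₁ := by
        rw [Finset.disjoint_left]
        intro x hx hx'
        rw [hB₀mem] at hx
        rw [hB₁mem] at hx'
        obtain ⟨_, i, rfl, hiI, hismall, hnR⟩ := hx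
        rcases hx' with ⟨n, hn, hx'⟩ | ⟨_, i', hii', _, _, hR⟩
        · exact hprimadd i hismall n hn ((mem_nbrs hM hdP).mp hx').1
        · have : w i' = w i := (hinv.eqiff i' i).mpr hii'
          exact hnR (this ▸ hR)
      have hexact : ∀ n, n < t → B₁.filter (· ∈ InM M n) = nbrs hM d n := by
        intro n hn
        apply Finset.ext
        intro x
        rw [Finset.mem_filter, hB₁mem]
        constructor
        · rintro ⟨⟨n', hn', hx⟩ | ⟨_, i, rfl, _, hismall, _⟩, hxn⟩
          · have := ((mem_nbrs hM hdP).mp hx).1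
            rwa [InM_eq_of_mem hM this hxn] at hx
          · exact absurd hxn (hprimadd i hismall n hn)
        · intro hx
          exact ⟨Or.inl ⟨n, hn, hx⟩, ((mem_nbrs hM hdP).mp hx).1⟩
      have hexcard : ∀ n, n < t → (B₁.filter (· ∈ InM M n)).card = n := by
        intro n hn
        rw [hexact n hn, nbrs_card hM hdP]
      have hcardB : ∀ n : ℕ, (B₁.filter (· ∈ InM M n)).card ≤ n := by
        intro n
        rcases lt_or_ge n t with hn | hn
        · rw [hexcard n hn]
        · have hsub : B₁.filter (· ∈ InM M n) ⊆ Cf := by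
            intro x hx
            rw [Finset.mem_filter, hB₁mem] at hx
            rcases hx with ⟨⟨n', hn', hx'⟩ | ⟨hxc, _⟩, hxn⟩
            · have := ((mem_nbrs hM hdP).mp hx').1
              have heq := InM_eq_of_mem hM this hxn
              omega
            · exact hxc
          calc (B₁.filter (· ∈ InM M n)).card ≤ Cf.card := Finset.card_le_card hsub
            _ ≤ n := by omega
      obtain ⟨d', hd'P, hd'F, hd'B₁, hd'B₀, hd'ex⟩ :=
        keyP hM B₀ B₁ h₀ h₁ hdisjB t hexcard hcardB Cf
      -- small-index neighborhoods of `d` and `d'` agree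
      have hB₁small : ∀ n, n < t → ∀ e, e ∈ InM M n → (e ∈ B₁ ↔ RM M d e) := by
        intro n hn e he
        constructor
        · intro hb
          have : e ∈ B₁.filter (· ∈ InM M n) := Finset.mem_filter.mpr ⟨hb, he⟩
          rw [hexact n hn] at this
          exact ((mem_nbrs hM hdP).mp this).2
        · intro hr
          have : e ∈ nbrs hM d n := (mem_nbrs hM hdP).mpr ⟨he, hr⟩
          rw [← hexact n hn, Finset.mem_filter] at this
          exact this.1
      have hsmall : ∀ n, n < t → ∀ e, e ∈ InM M n → (RM M d e ↔ RM M d' e) := by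
        intro n hn e he
        rw [← hB₁small n hn e he, hd'ex n hn e he]
      -- relations towards the configuration agree
      have hmatch : ∀ i, w i ∈ IM M → (RM M d (w i) ↔ RM M d' (w' i)) := by
        intro i hiI
        by_cases hsm : ∃ n, n < t ∧ w i ∈ InM M n
        · obtain ⟨n, hn, hmem⟩ := hsm
          have hunmv : w i = w' i := hinv.unmoved_of_inm hM i hn (Or.inl hmem)
          rw [← hunmv]
          exact hsmall n hn (w i) hmem
        · push_neg at hsm
          have hsm' : ∀ n, n < t → w i ∉ InM M n := fun n hn => hsm n hn
          by_cases hr : RM M d (w i)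
          · have : w' i ∈ B₁ := by
              rw [hB₁mem]
              exact Or.inr ⟨hw' i, i, rfl, hiI, hsm', hr⟩
            exact iff_of_true hr (hd'B₁ _ this)
          · have : w' i ∈ B₀ := by
              rw [hB₀mem]
              exact ⟨hw' i, i, rfl, hiI, hsm', hr⟩
            exact iff_of_false hr (hd'B₀ _ this)
      have hdI : d ∉ IM M := not_IM_of_PM hM hdP
      have hd'I : d' ∉ IM M := not_IM_of_PM hM hd'P
      refine ⟨d', ?_, ?_, ?_, ?_, ?_⟩
      · rintro (_ | i) (_ | k)
        · simp
        · simp only [extO_none, extO_some]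
          exact iff_of_false (fun h => hdr k h.symm) (fun h => hd'F (h ▸ hw' k))
        · simp only [extO_none, extO_some]
          exact iff_of_false (hdr i) (fun h => hd'F (h.symm ▸ hw' i))
        · simpa using hinv.eqiff i k
      · rintro (_ | i)
        · simpa using iff_of_true hdP hd'P
        · simpa using hinv.pmem i
      · rintro (_ | i) hne n hn
        · exact ⟨PM_not_InM hM hdP n, PM_not_InM hM hd'P n⟩
        · simpa using hinv.avoid i (by simpa using hne) n hn
      · rintro (_ | i) (_ | k)
        · simp only [extO_none]
          exact iff_of_false (fun h => hdI (hM.R_sub d d h).2)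
            (fun h => hd'I (hM.R_sub d' d' h).2)
        · simp only [extO_none, extO_some]
          by_cases hkI : w k ∈ IM M
          · exact hmatch k hkI
          · exact iff_of_false (fun h => hkI (hM.R_sub _ _ h).2)
              (fun h => ((hinv.imem hM k).not.mp hkI) (hM.R_sub _ _ h).2)
        · simp only [extO_none, extO_some]
          exact iff_of_false (fun h => hdI (hM.R_sub _ _ h).2)
            (fun h => hd'I (hM.R_sub _ _ h).2)
        · simpa using hinv.rel i k
      · rintro (_ | i) hne n hn e he
        · simpa using hsmall n hn e he
        · simpa using hinv.nbr i (by simpa using hne) n hn e he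
    · -- `d` is a fresh element of `I`
      have hdI : d ∈ IM M := IM_of_not_PM hM hdP
      by_cases hsm : ∃ n, n < t ∧ d ∈ InM M n
      · -- `d` lies in a small `I_n` : it can be matched by itself
        obtain ⟨n₀, hn₀, hdn₀⟩ := hsm
        refine ⟨d, ?_, ?_, ?_, ?_, ?_⟩
        · rintro (_ | i) (_ | k)
          · simp
          · simp only [extO_none, extO_some]
            refine iff_of_false (fun h => hdr k h.symm) (fun h => ?_)
            have hunmv : w k = w' k := hinv.unmoved_of_inm hM k hn₀ (Or.inr (h ▸ hdn₀))
            exact hdr k (hunmv.trans h.symm)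
          · simp only [extO_none, extO_some]
            refine iff_of_false (hdr i) (fun h => ?_)
            have hunmv : w i = w' i := hinv.unmoved_of_inm hM i hn₀ (Or.inr (h.symm ▸ hdn₀))
            exact hdr i (hunmv.trans h)
          · simpa using hinv.eqiff i k
        · rintro (_ | i)
          · simp
          · simpa using hinv.pmem i
        · rintro (_ | i) hne n hn
          · simp at hne
          · simpa using hinv.avoid i (by simpa using hne) n hn
        · rintro (_ | i) (_ | k)
          · simp
          · simp only [extO_none, extO_some]
            exact iff_of_false (notR_left hM hdP) (notR_left hM hdP)
          · simp only [extO_none, extO_some]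
            by_cases hmv : w i = w' i
            · rw [hmv]
            · by_cases hiP : w i ∈ PM M
              · exact hinv.nbr i hmv n₀ hn₀ d hdn₀
              · exact iff_of_false (notR_left hM hiP)
                  (notR_left hM ((hinv.pmem i).not.mp hiP))
          · simpa using hinv.rel i k
        · rintro (_ | i) hne n hn e he
          · simp at hne
          · simpa using hinv.nbr i (by simpa using hne) n hn e he
      · -- `d` avoids all small `I_n` : use the key lemma
        push_neg at hsm
        set A₁ : Finset M := Cf.filter (fun x => ∃ i, w' i = x ∧ w i ∈ PM M ∧ RM M (w i) d)
          with hA₁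
        set A₀ : Finset M := Cf.filter (fun x => ∃ i, w' i = x ∧ w i ∈ PM M ∧ ¬ RM M (w i) d)
          with hA₀
        have hA₁mem : ∀ x, x ∈ A₁ ↔ (x ∈ Cf ∧ ∃ i, w' i = x ∧ w i ∈ PM M ∧ RM M (w i) d) := by
          intro x; rw [hA₁, Finset.mem_filter]
        have hA₀mem : ∀ x, x ∈ A₀ ↔ (x ∈ Cf ∧ ∃ i, w' i = x ∧ w i ∈ PM M ∧ ¬ RM M (w i) d) := by
          intro x; rw [hA₀, Finset.mem_filter]
        have hsub₁ : ↑A₁ ⊆ PM M := by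
          intro x hx
          rw [Finset.mem_coe, hA₁mem] at hx
          obtain ⟨_, i, rfl, hiP, _⟩ := hx
          exact (hinv.pmem i).mp hiP
        have hsub₀ : ↑A₀ ⊆ PM M := by
          intro x hx
          rw [Finset.mem_coe, hA₀mem] at hx
          obtain ⟨_, i, rfl, hiP, _⟩ := hx
          exact (hinv.pmem i).mp hiP
        have hdisjA : Disjoint A₀ A₁ := by
          rw [Finset.disjoint_left]
          intro x hx hx'
          rw [hA₀mem] at hx
          rw [hA₁mem] at hx'
          obtain ⟨_, i, rfl, _, hnR⟩ := hx
          obtain ⟨_, i', hii', _, hR⟩ := hx'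
          have : w i' = w i := (hinv.eqiff i' i).mpr hii'
          exact hnR (this ▸ hR)
        obtain ⟨d', hd'I, hd'sm, hd'F, hd'A₁, hd'A₀⟩ :=
          key hM A₀ A₁ hsub₀ hsub₁ hdisjA (Finset.range t) Cf
        have hd'P : d' ∉ PM M := not_PM_of_IM hM hd'I
        have hmatch : ∀ i, RM M (w i) d ↔ RM M (w' i) d' := by
          intro i
          by_cases hiP : w i ∈ PM M
          · by_cases hr : RM M (w i) d
            · refine iff_of_true hr (hd'A₁ _ ?_)
              rw [hA₁mem]
              exact ⟨hw' i, i, rfl, hiP, hr⟩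
            · refine iff_of_false hr (hd'A₀ _ ?_)
              rw [hA₀mem]
              exact ⟨hw' i, i, rfl, hiP, hr⟩
          · exact iff_of_false (notR_left hM hiP) (notR_left hM ((hinv.pmem i).not.mp hiP))
        refine ⟨d', ?_, ?_, ?_, ?_, ?_⟩
        · rintro (_ | i) (_ | k)
          · simp
          · simp only [extO_none, extO_some]
            exact iff_of_false (fun h => hdr k h.symm) (fun h => hd'F (h ▸ hw' k))
          · simp only [extO_none, extO_some]
            exact iff_of_false (hdr i) (fun h => hd'F (h.symm ▸ hw' i))
          · simpa using hinv.eqiff i k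
        · rintro (_ | i)
          · simpa using iff_of_false hdP hd'P
          · simpa using hinv.pmem i
        · rintro (_ | i) hne n hn
          · exact ⟨hsm n hn, hd'sm n (Finset.mem_range.mpr hn)⟩
          · simpa using hinv.avoid i (by simpa using hne) n hn
        · rintro (_ | i) (_ | k)
          · simp only [extO_none]
            exact iff_of_false (notR_left hM hdP) (notR_left hM hd'P)
          · simp only [extO_none, extO_some]
            exact iff_of_false (notR_left hM hdP) (notR_left hM hd'P)
          · simp only [extO_none, extO_some]
            exact hmatch i
          · simpa using hinv.rel i k
        · rintro (_ | i) hne n hn e he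
          · simp only [extO_none]
            exact iff_of_false (notR_left hM hdP) (notR_left hM hd'P)
          · simpa using hinv.nbr i (by simpa using hne) n hn e he

end InvLemmas

end CasAux

namespace CasAux

attribute [local instance] Classical.propDecidable Classical.decEq

/-- Quantifier depth of a bounded formula. -/
def qd {α : Type v} : {n : ℕ} → Lcas.BoundedFormula α n → ℕ
  | _, .falsum => 0
  | _, .equal _ _ => 0
  | _, .rel _ _ => 0
  | _, .imp f g => max (qd f) (qd g)
  | _, .all f => qd f + 1

/-- Bound on indices of `I_n` symbols occurring in a relation symbol. -/
def relGood (t : ℕ) : {l : ℕ} → Lcas.Relations l → Prop := fun {l} R =>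
  match l, R with
  | 1, r => ∀ k, (show CasRel1 from r) = CasRel1.In k → k < t
  | _, _ => True

/-- All `I_n` indices appearing in the formula are `< t`. -/
def goodIdx {α : Type v} (t : ℕ) : {n : ℕ} → Lcas.BoundedFormula α n → Prop
  | _, .falsum => True
  | _, .equal _ _ => True
  | _, .rel R _ => relGood t R
  | _, .imp f g => goodIdx t f ∧ goodIdx t g
  | _, .all f => goodIdx t f

section Main

variable {M : Type u} [Lcas.Structure M] (hM : IsTcasModel M)

omit hM in
theorem elim_mem {α : Type v} {n : ℕ} {v : α → M} {xs : Fin n → M} {Cf : Finset M}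
    (hv : ∀ a, v a ∈ Cf) (hxs : ∀ i, xs i ∈ Cf) : ∀ i, Sum.elim v xs i ∈ Cf := by
  rintro (a | i)
  exacts [hv a, hxs i]

omit hM in
theorem snoc_mem {n : ℕ} {xs : Fin n → M} {Cf : Finset M} (h : ∀ i, xs i ∈ Cf) {d : M}
    (hd : d ∈ Cf) : ∀ i, Fin.snoc (α := fun _ => M) xs d i ∈ Cf := by
  intro i
  refine Fin.lastCases ?_ ?_ i
  · rw [Fin.snoc_last]; exact hd
  · intro j; rw [Fin.snoc_castSucc]; exact h j

/-- Index lifting for the `all` case. -/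
def liftIdx {α : Type v} {n : ℕ} : α ⊕ Fin (n + 1) → Option (α ⊕ Fin n) :=
  Sum.elim (fun a => some (Sum.inl a)) (fun i => Fin.lastCases none (fun j => some (Sum.inr j)) i)

omit hM in
theorem elim_snoc_eq {α : Type v} {n : ℕ} (v : α → M) (xs : Fin n → M) (d : M) :
    Sum.elim v (Fin.snoc xs d) = (extO (Sum.elim v xs) d) ∘ liftIdx := by
  funext x
  rcases x with a | i
  · rfl
  · refine Fin.lastCases ?_ ?_ i
    · simp [liftIdx, extO, Fin.snoc_last]
    · intro j
      simp [liftIdx, extO, Fin.snoc_castSucc]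

include hM in
theorem rel1_iff {t : ℕ} {β : Type v} {w w' : β → M} (hinv : Inv t w w') (r : CasRel1)
    (hr : ∀ k, r = CasRel1.In k → k < t) (g : β) :
    (Structure.RelMap (L := Lcas) (n := 1) (r : Lcas.Relations 1) ![w g] ↔
      Structure.RelMap (L := Lcas) (n := 1) (r : Lcas.Relations 1) ![w' g]) := by
  cases r with
  | P => exact hinv.pmem g
  | I => exact hinv.imem hM g
  | In k => exact hinv.inmem hM g (hr k rfl)

omit hM in
theorem rel2_iff {t : ℕ} {β : Type v} {w w' : β → M} (hinv : Inv t w w') (g₁ g₂ : β) :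
    (Structure.RelMap (L := Lcas) (n := 2) (Unit.unit : Lcas.Relations 2) ![w g₁, w g₂] ↔
      Structure.RelMap (L := Lcas) (n := 2) (Unit.unit : Lcas.Relations 2) ![w' g₁, w' g₂]) :=
  hinv.rel g₁ g₂

include hM in
/-- The main transfer theorem: formulas cannot distinguish invariant configurations. -/
theorem main {α : Type v} {n : ℕ} (ψ : Lcas.BoundedFormula α n) :
    ∀ (t : ℕ) (v v' : α → M) (xs xs' : Fin n → M) (Cf : Finset M),
    goodIdx t ψ → (∀ a, v a ∈ Cf) → (∀ a, v' a ∈ Cf) → (∀ i, xs i ∈ Cf) → (∀ i, xs' i ∈ Cf) →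
    Cf.card + 2 * qd ψ + 1 < t →
    Inv t (Sum.elim v xs) (Sum.elim v' xs') →
    (ψ.Realize v xs ↔ ψ.Realize v' xs') := by
  induction ψ with
  | falsum =>
    intro t v v' xs xs' Cf hidx hv hv' hxs hxs' hcard hinv
    simp [BoundedFormula.Realize]
  | equal t₁ t₂ =>
    intro t v v' xs xs' Cf hidx hv hv' hxs hxs' hcard hinv
    obtain ⟨g₁, rfl⟩ := term_eq_var t₁
    obtain ⟨g₂, rfl⟩ := term_eq_var t₂
    exact hinv.eqiff g₁ g₂
  | rel R ts =>
    intro t v v' xs xs' Cf hidx hv hv' hxs hxs' hcard hinv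
    rename_i n' l
    show (Structure.RelMap R fun i => Term.realize (Sum.elim v xs) (ts i)) ↔
      (Structure.RelMap R fun i => Term.realize (Sum.elim v' xs') (ts i))
    rcases l with _ | _ | _ | l
    · exact (show Empty from R).elim
    · -- unary relations
      obtain ⟨g, hg⟩ := term_eq_var (ts 0)
      have e1 : ∀ q : α ⊕ Fin n' → M, (fun i : Fin 1 => (ts i).realize q) = ![q g] := by
        intro q
        funext i
        rw [Subsingleton.elim i (0 : Fin 1), hg]
        simp
      rw [e1, e1]
      exact rel1_iff hM hinv (show CasRel1 from R) hidx g
    · -- the binary relation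
      obtain ⟨g₁, hg₁⟩ := term_eq_var (ts 0)
      obtain ⟨g₂, hg₂⟩ := term_eq_var (ts 1)
      have e2 : ∀ q : α ⊕ Fin n' → M, (fun i : Fin 2 => (ts i).realize q) = ![q g₁, q g₂] := by
        intro q
        funext i
        refine Fin.cases ?_ (fun j => ?_) i
        · rw [hg₁]; simp
        · rw [Subsingleton.elim j (0 : Fin 1)]
          have : ts 1 = Term.var g₂ := hg₂
          rw [show ((0 : Fin 1).succ) = (1 : Fin 2) from rfl, this]
          simp
      rw [e2, e2]
      exact rel2_iff hinv g₁ g₂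
    · exact (show Empty from R).elim
  | imp f g ihf ihg =>
    intro t v v' xs xs' Cf hidx hv hv' hxs hxs' hcard hinv
    have hq : qd (f.imp g) = max (qd f) (qd g) := rfl
    rw [BoundedFormula.realize_imp, BoundedFormula.realize_imp]
    have h1 := ihf t v v' xs xs' Cf hidx.1 hv hv' hxs hxs'
      (by have := Nat.le_max_left (qd f) (qd g); omega) hinv
    have h2 := ihg t v v' xs xs' Cf hidx.2 hv hv' hxs hxs'
      (by have := Nat.le_max_right (qd f) (qd g); omega) hinv
    rw [h1, h2]
  | all θ ih =>
    intro t v v' xs xs' Cf hidx hv hv' hxs hxs' hcard hinv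
    have hq : qd θ.all = qd θ + 1 := rfl
    rw [BoundedFormula.realize_all, BoundedFormula.realize_all]
    have hcf : Cf.card + 1 < t := by omega
    have hw := elim_mem (M := M) hv hxs
    have hw' := elim_mem (M := M) hv' hxs'
    constructor
    · intro H d'
      obtain ⟨d, hd⟩ := ext_inv hM t Cf hw' hw hcf hinv.symm d'
      have h3 := (hd.symm).comp liftIdx
      rw [← elim_snoc_eq, ← elim_snoc_eq] at h3
      have hun : ∀ x ∈ Cf, x ∈ Cf ∪ {d, d'} := fun x hx => Finset.mem_union_left _ hx
      have hdm : d ∈ Cf ∪ {d, d'} := Finset.mem_union_right _ (by simp)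
      have hdm' : d' ∈ Cf ∪ {d, d'} := Finset.mem_union_right _ (by simp)
      have hcard2 : (Cf ∪ {d, d'}).card + 2 * qd θ + 1 < t := by
        have h4 := Finset.card_union_le Cf ({d, d'} : Finset M)
        have h5 : ({d, d'} : Finset M).card ≤ 2 := Finset.card_insert_le _ _ |>.trans (by simp)
        omega
      exact (ih t v v' (Fin.snoc xs d) (Fin.snoc xs' d') (Cf ∪ {d, d'}) hidx
        (fun a => hun _ (hv a)) (fun a => hun _ (hv' a))
        (snoc_mem (fun i => hun _ (hxs i)) hdm) (snoc_mem (fun i => hun _ (hxs' i)) hdm')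
        hcard2 h3).mp (H d)
    · intro H d
      obtain ⟨d', hd⟩ := ext_inv hM t Cf hw hw' hcf hinv d
      have h3 := hd.comp liftIdx
      rw [← elim_snoc_eq, ← elim_snoc_eq] at h3
      have hun : ∀ x ∈ Cf, x ∈ Cf ∪ {d, d'} := fun x hx => Finset.mem_union_left _ hx
      have hdm : d ∈ Cf ∪ {d, d'} := Finset.mem_union_right _ (by simp)
      have hdm' : d' ∈ Cf ∪ {d, d'} := Finset.mem_union_right _ (by simp)
      have hcard2 : (Cf ∪ {d, d'}).card + 2 * qd θ + 1 < t := by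
        have h4 := Finset.card_union_le Cf ({d, d'} : Finset M)
        have h5 : ({d, d'} : Finset M).card ≤ 2 := Finset.card_insert_le _ _ |>.trans (by simp)
        omega
      exact (ih t v v' (Fin.snoc xs d) (Fin.snoc xs' d') (Cf ∪ {d, d'}) hidx
        (fun a => hun _ (hv a)) (fun a => hun _ (hv' a))
        (snoc_mem (fun i => hun _ (hxs i)) hdm) (snoc_mem (fun i => hun _ (hxs' i)) hdm')
        hcard2 h3).mpr (H d')

end Main

end CasAux

namespace CasAux

attribute [local instance] Classical.propDecidable Classical.decEq

/-- Sup of `I_n` indices of a relation symbol. -/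
def relIdxB : {l : ℕ} → Lcas.Relations l → ℕ := fun {l} R =>
  match l, R with
  | 1, r => match (show CasRel1 from r) with
    | CasRel1.In k => k + 1
    | _ => 0
  | _, _ => 0

/-- Sup of `I_n` indices appearing in a formula. -/
def idxSup {α : Type v} : {n : ℕ} → Lcas.BoundedFormula α n → ℕ
  | _, .falsum => 0
  | _, .equal _ _ => 0
  | _, .rel R _ => relIdxB R
  | _, .imp f g => max (idxSup f) (idxSup g)
  | _, .all f => idxSup f

theorem goodIdx_of_le {α : Type v} {n : ℕ} (ψ : Lcas.BoundedFormula α n) (t : ℕ)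
    (h : idxSup ψ ≤ t) : goodIdx t ψ := by
  induction ψ with
  | falsum => exact trivial
  | equal _ _ => exact trivial
  | rel R ts =>
    rename_i n' l
    rcases l with _ | _ | _ | l
    · exact (show Empty from R).elim
    · intro k hk
      have hR : R = (CasRel1.In k : Lcas.Relations 1) := hk
      subst hR
      have he : idxSup (BoundedFormula.rel (l := 1) (CasRel1.In k : Lcas.Relations 1) ts) = k + 1 := rfl
      omega
    · exact trivial
    · exact (show Empty from R).elim
  | imp f g ihf ihg =>
    have h1 : idxSup (f.imp g) = max (idxSup f) (idxSup g) := rfl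
    exact ⟨ihf (by omega), ihg (by omega)⟩
  | all θ ih =>
    exact ih h

section TypeA

variable {M : Type u} [Lcas.Structure M]

theorem typeA_mem_fI {A : Set M} : fI M ∈ typeA A :=
  Set.mem_union_left _ (Set.mem_union_left _ (Set.mem_union_left _ (Set.mem_union_left _ rfl)))

theorem typeA_mem_fIn {A : Set M} (n : ℕ) : (fIn M n).not ∈ typeA A :=
  Set.mem_union_left _ (Set.mem_union_left _ (Set.mem_union_left _
    (Set.mem_union_right _ ⟨n, rfl⟩)))

theorem typeA_mem_fNe {A : Set M} {c : M} (hc : c ∈ IM M) : fNe c ∈ typeA A :=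
  Set.mem_union_left _ (Set.mem_union_left _ (Set.mem_union_right _ ⟨c, hc, rfl⟩))

theorem typeA_mem_fR {A : Set M} {a : M} (ha : a ∈ A) : fRleft a ∈ typeA A :=
  Set.mem_union_left _ (Set.mem_union_right _ ⟨a, ha, rfl⟩)

theorem typeA_mem_fRn {A : Set M} {a : M} (ha : a ∈ PM M \ A) : (fRleft a).not ∈ typeA A :=
  Set.mem_union_right _ ⟨a, ha, rfl⟩

theorem typeA_cases {A : Set M} {χ : Lcas.Formula (M ⊕ Fin 1)} (h : χ ∈ typeA A) :
    χ = fI M ∨ (∃ n, χ = (fIn M n).not) ∨ (∃ c ∈ IM M, χ = fNe c) ∨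
      (∃ a ∈ A, χ = fRleft a) ∨ (∃ a ∈ PM M \ A, χ = (fRleft a).not) := by
  rcases h with ((((h | h) | h) | h) | h)
  · exact Or.inl h
  · exact Or.inr (Or.inl h)
  · exact Or.inr (Or.inr (Or.inl h))
  · exact Or.inr (Or.inr (Or.inr (Or.inl h)))
  · exact Or.inr (Or.inr (Or.inr (Or.inr h)))

end TypeA

section Types

variable {M : Type u} [Lcas.Structure M] (hM : IsTcasModel M)

omit hM in
theorem finsat_not_both {q : Set (Lcas.Formula (M ⊕ Fin 1))} (h : FinSatIn M q)
    {φ : Lcas.Formula (M ⊕ Fin 1)} (h1 : φ ∈ q) (h2 : φ.not ∈ q) : False := by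
  obtain ⟨a, ha⟩ := h {φ, φ.not} (by
    intro x hx
    rw [Finset.coe_insert, Set.mem_insert_iff, Finset.coe_singleton,
      Set.mem_singleton_iff] at hx
    rcases hx with rfl | rfl
    · exact h1
    · exact h2)
  have hr1 := ha φ (Finset.mem_insert_self _ _)
  have hr2 := ha φ.not (Finset.mem_insert_of_mem (Finset.mem_singleton_self _))
  exact realizesAt_not.mp hr2 hr1

omit hM in
theorem complete_decides {q : Set (Lcas.Formula (M ⊕ Fin 1))} (hq : IsCompleteTypeOver M q)
    (φ : Lcas.Formula (M ⊕ Fin 1)) : φ ∈ q ∨ φ.not ∈ q := by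
  by_contra h
  push_neg at h
  obtain ⟨h1, h2⟩ := h
  have hn1 : ¬ FinSatIn M (insert φ q) := fun hf =>
    h1 ((hq.2 _ hf (Set.subset_insert φ q)) ▸ Set.mem_insert φ q)
  have hn2 : ¬ FinSatIn M (insert φ.not q) := fun hf =>
    h2 ((hq.2 _ hf (Set.subset_insert φ.not q)) ▸ Set.mem_insert φ.not q)
  rw [FinSatIn] at hn1 hn2
  push_neg at hn1 hn2
  obtain ⟨s₁, hs₁, hbad₁⟩ := hn1
  obtain ⟨s₂, hs₂, hbad₂⟩ := hn2
  have hsq : ↑((s₁.erase φ) ∪ (s₂.erase φ.not)) ⊆ q := by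
    intro x hx
    rw [Finset.coe_union, Set.mem_union] at hx
    rcases hx with hx | hx
    · rw [Finset.mem_coe, Finset.mem_erase] at hx
      rcases hs₁ hx.2 with h | h
      · exact absurd h hx.1
      · exact h
    · rw [Finset.mem_coe, Finset.mem_erase] at hx
      rcases hs₂ hx.2 with h | h
      · exact absurd h hx.1
      · exact h
  obtain ⟨a, ha⟩ := hq.1 _ hsq
  by_cases hra : RealizesAt M φ a
  · obtain ⟨χ, hχ, hnr⟩ := hbad₁ a
    by_cases hxφ : χ = φ
    · exact hnr (hxφ ▸ hra)
    · exact hnr (ha χ (Finset.mem_union_left _ (Finset.mem_erase.mpr ⟨hxφ, hχ⟩)))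
  · obtain ⟨χ, hχ, hnr⟩ := hbad₂ a
    by_cases hxφ : χ = φ.not
    · exact hnr (hxφ ▸ (realizesAt_not.mpr hra))
    · exact hnr (ha χ (Finset.mem_union_right _ (Finset.mem_erase.mpr ⟨hxφ, hχ⟩)))

include hM in
theorem exists_complete {p : Set (Lcas.Formula (M ⊕ Fin 1))} (hfs : FinSatIn M p) :
    ∃ q, IsCompleteTypeOver M q ∧ p ⊆ q := by
  have hchaincond : ∀ c ⊆ {r : Set (Lcas.Formula (M ⊕ Fin 1)) | FinSatIn M r},
      IsChain (· ⊆ ·) c → c.Nonempty → ∃ ub ∈ {r | FinSatIn M r}, ∀ s ∈ c, s ⊆ ub := by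
    intro c hc hchain hne
    refine ⟨⋃₀ c, ?_, fun s hs => Set.subset_sUnion_of_mem hs⟩
    intro s hs
    have hfind : ∀ s : Finset (Lcas.Formula (M ⊕ Fin 1)), ↑s ⊆ ⋃₀ c →
        s = ∅ ∨ ∃ r ∈ c, ↑s ⊆ r := by
      intro s
      induction s using Finset.induction_on with
      | empty => exact fun _ => Or.inl rfl
      | insert x s' hx ih =>
        intro hsub
        have hx' : x ∈ ⋃₀ c := hsub (by simp)
        obtain ⟨r₁, hr₁, hxr₁⟩ := hx'
        have hstep : (↑s' : Set (Lcas.Formula (M ⊕ Fin 1))) ⊆ ↑(insert x s') := by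
          intro y hy
          exact Finset.mem_insert_of_mem hy
        rcases ih (Set.Subset.trans hstep hsub) with he | ⟨r₂, hr₂, hsr₂⟩
        · subst he
          refine Or.inr ⟨r₁, hr₁, ?_⟩
          intro y hy
          have hyx : y = x := by simpa using hy
          subst hyx
          exact hxr₁
        · rcases eq_or_ne r₁ r₂ with rfl | hr12
          · refine Or.inr ⟨r₁, hr₁, ?_⟩
            intro y hy
            rw [Finset.coe_insert, Set.mem_insert_iff] at hy
            rcases hy with rfl | hy
            · exact hxr₁
            · exact hsr₂ hy
          · rcases hchain hr₁ hr₂ hr12 with hle | hle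
            · refine Or.inr ⟨r₂, hr₂, ?_⟩
              intro y hy
              rw [Finset.coe_insert, Set.mem_insert_iff] at hy
              rcases hy with rfl | hy
              · exact hle hxr₁
              · exact hsr₂ hy
            · refine Or.inr ⟨r₁, hr₁, ?_⟩
              intro y hy
              rw [Finset.coe_insert, Set.mem_insert_iff] at hy
              rcases hy with rfl | hy
              · exact hxr₁
              · exact hle (hsr₂ hy)
    rcases hfind s hs with rfl | ⟨r, hr, hsr⟩
    · obtain ⟨a, _⟩ := hM.P_inf.nonempty
      exact ⟨a, fun χ hχ => absurd hχ (Finset.notMem_empty χ)⟩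
    · exact (hc hr) s hsr
  obtain ⟨q, hpq, hmax⟩ := zorn_subset_nonempty {r | FinSatIn M r} hchaincond p hfs
  refine ⟨q, ⟨hmax.1, ?_⟩, hpq⟩
  intro q' hq' hsub
  exact Set.Subset.antisymm (hmax.2 hq' hsub) hsub

include hM in
/-- `typeA A` is finitely satisfiable. -/
theorem finSat_typeA {A : Set M} (hA : A ⊆ PM M) : FinSatIn M (typeA A) := by
  have Hmain : ∀ s : Finset (Lcas.Formula (M ⊕ Fin 1)), ↑s ⊆ typeA A →
      ∃ (A₀ A₁ : Finset M) (N : Finset ℕ) (F : Finset M),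
      ↑A₁ ⊆ A ∧ (↑A₀ : Set M) ⊆ PM M \ A ∧
      (∀ b, b ∈ IM M → (∀ n ∈ N, b ∉ InM M n) → b ∉ F → (∀ a ∈ A₁, RM M a b) →
        (∀ a ∈ A₀, ¬ RM M a b) → ∀ χ ∈ s, RealizesAt M χ b) := by
    intro s
    induction s using Finset.induction_on with
    | empty =>
      intro _
      exact ⟨∅, ∅, ∅, ∅, by simp, by simp,
        fun b _ _ _ _ _ χ hχ => absurd hχ (Finset.notMem_empty χ)⟩
    | insert χ s' hmem ih =>
      intro hs
      have hs' : ↑s' ⊆ typeA A := fun x hx => hs (Finset.mem_coe.mpr (Finset.mem_insert_of_mem hx))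
      obtain ⟨A₀, A₁, N, F, h1, h0, H⟩ := ih hs'
      have hχA : χ ∈ typeA A := hs (by simp)
      rcases typeA_cases hχA with hc | ⟨n, hc⟩ | ⟨c, hcI, hc⟩ | ⟨a, haA, hc⟩ | ⟨a, haA, hc⟩
      · subst hc
        refine ⟨A₀, A₁, N, F, h1, h0, ?_⟩
        intro b hb hbN hbF hb1 hb0 χ' hχ'
        rcases Finset.mem_insert.mp hχ' with rfl | h
        · exact realizesAt_fI.mpr hb
        · exact H b hb hbN hbF hb1 hb0 χ' h
      · subst hc
        refine ⟨A₀, A₁, insert n N, F, h1, h0, ?_⟩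
        intro b hb hbN hbF hb1 hb0 χ' hχ'
        rcases Finset.mem_insert.mp hχ' with rfl | h
        · exact realizesAt_not.mpr
            (fun hr => hbN n (Finset.mem_insert_self _ _) (realizesAt_fIn.mp hr))
        · exact H b hb (fun n' hn' => hbN n' (Finset.mem_insert_of_mem hn')) hbF hb1 hb0 χ' h
      · subst hc
        refine ⟨A₀, A₁, N, insert c F, h1, h0, ?_⟩
        intro b hb hbN hbF hb1 hb0 χ' hχ'
        rcases Finset.mem_insert.mp hχ' with rfl | h
        · exact realizesAt_fNe.mpr (fun he => hbF (he ▸ Finset.mem_insert_self c F))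
        · exact H b hb hbN (fun hbF' => hbF (Finset.mem_insert_of_mem hbF')) hb1 hb0 χ' h
      · subst hc
        refine ⟨A₀, insert a A₁, N, F, ?_, h0, ?_⟩
        · intro x hx
          rw [Finset.coe_insert, Set.mem_insert_iff] at hx
          rcases hx with rfl | hx
          · exact haA
          · exact h1 hx
        · intro b hb hbN hbF hb1 hb0 χ' hχ'
          rcases Finset.mem_insert.mp hχ' with rfl | h
          · exact realizesAt_fRleft.mpr (hb1 a (Finset.mem_insert_self a A₁))
          · exact H b hb hbN hbF (fun a' ha' => hb1 a' (Finset.mem_insert_of_mem ha')) hb0 χ' h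
      · subst hc
        refine ⟨insert a A₀, A₁, N, F, h1, ?_, ?_⟩
        · intro x hx
          rw [Finset.coe_insert, Set.mem_insert_iff] at hx
          rcases hx with rfl | hx
          · exact haA
          · exact h0 hx
        · intro b hb hbN hbF hb1 hb0 χ' hχ'
          rcases Finset.mem_insert.mp hχ' with rfl | h
          · exact realizesAt_not.mpr
              (fun hr => hb0 a (Finset.mem_insert_self a A₀) (realizesAt_fRleft.mp hr))
          · exact H b hb hbN hbF hb1 (fun a' ha' => hb0 a' (Finset.mem_insert_of_mem ha')) χ' h
  intro s hs
  obtain ⟨A₀, A₁, N, F, hA₁, hA₀, H⟩ := Hmain s hs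
  have hd : Disjoint A₀ A₁ := by
    rw [Finset.disjoint_left]
    intro x hx hx'
    exact (hA₀ hx).2 (hA₁ hx')
  obtain ⟨b, hbI, hbN, hbF, hb1, hb0⟩ := key hM A₀ A₁
    (fun x hx => (hA₀ hx).1) (fun x hx => hA (hA₁ hx)) hd N F
  exact ⟨b, H b hbI hbN hbF hb1 hb0⟩

end Types

end CasAux

namespace CasAux

attribute [local instance] Classical.propDecidable Classical.decEq

section Core

variable {M : Type u} [Lcas.Structure M] (hM : IsTcasModel M)
include hM

theorem inv_start {t : ℕ} {β : Type v} {w w' : β → M} {Cfin : Finset M} {b b' : M}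
    (hbI : b ∈ IM M) (hb'I : b' ∈ IM M)
    (hbn : ∀ n, n < t → b ∉ InM M n ∧ b' ∉ InM M n)
    (hbne : ∀ c ∈ Cfin, b ≠ c ∧ b' ≠ c)
    (hbR : ∀ c ∈ Cfin, (RM M c b ↔ RM M c b'))
    (hcase : ∀ i : β, (∃ m, m ∈ Cfin ∧ w i = m ∧ w' i = m) ∨ (w i = b ∧ w' i = b')) :
    Inv t w w' := by
  have hbP : b ∉ PM M := not_PM_of_IM hM hbI
  have hb'P : b' ∉ PM M := not_PM_of_IM hM hb'I
  constructor
  · intro i j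
    rcases hcase i with ⟨m, hm, h1, h2⟩ | ⟨h1, h2⟩ <;>
      rcases hcase j with ⟨m', hm', h3, h4⟩ | ⟨h3, h4⟩ <;> rw [h1, h2, h3, h4]
    · exact iff_of_false (fun h => (hbne m hm).1 h.symm) (fun h => (hbne m hm).2 h.symm)
    · exact iff_of_false (fun h => (hbne m' hm').1 h) (fun h => (hbne m' hm').2 h)
    · exact iff_of_true rfl rfl
  · intro i
    rcases hcase i with ⟨m, hm, h1, h2⟩ | ⟨h1, h2⟩ <;> rw [h1, h2]
    exact iff_of_false hbP hb'P
  · intro i hne n hn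
    rcases hcase i with ⟨m, hm, h1, h2⟩ | ⟨h1, h2⟩
    · exact absurd (h1.trans h2.symm) hne
    · rw [h1, h2]; exact hbn n hn
  · intro i j
    rcases hcase i with ⟨m, hm, h1, h2⟩ | ⟨h1, h2⟩ <;>
      rcases hcase j with ⟨m', hm', h3, h4⟩ | ⟨h3, h4⟩ <;> rw [h1, h2, h3, h4]
    · exact hbR m hm
    · exact iff_of_false (notR_left hM hbP) (notR_left hM hb'P)
    · exact iff_of_false (notR_left hM hbP) (notR_left hM hb'P)
  · intro i hne n hn e he
    rcases hcase i with ⟨m, hm, h1, h2⟩ | ⟨h1, h2⟩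
    · exact absurd (h1.trans h2.symm) hne
    · rw [h1, h2]
      exact iff_of_false (notR_left hM hbP) (notR_left hM hb'P)

/-- The core separation lemma: any formula is decided by a finite fragment of `typeA A`. -/
theorem core {A : Set M} (hA : A ⊆ PM M) (φ : Lcas.Formula (M ⊕ Fin 1)) :
    ∃ s : Finset (Lcas.Formula (M ⊕ Fin 1)), ↑s ⊆ typeA A ∧
      ∀ b b' : M, (∀ χ ∈ s, RealizesAt M χ b) → (∀ χ ∈ s, RealizesAt M χ b') →
        (RealizesAt M φ b ↔ RealizesAt M φ b') := by
  obtain ⟨m₀, _⟩ := hM.P_inf.nonempty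
  have hself : (↑(φ.freeVarFinset) : Set (M ⊕ Fin 1)) ⊆ (↑(φ.freeVarFinset) : Set (M ⊕ Fin 1)) :=
    Set.Subset.refl _
  set ψ := φ.restrictFreeVar (Set.inclusion hself) with hψ
  set Cfin : Finset M := φ.freeVarFinset.image (Sum.elim id fun _ => m₀) with hCfin
  set t : ℕ := idxSup ψ + Cfin.card + 2 * qd ψ + 4 with ht
  set s1 : Finset (Lcas.Formula (M ⊕ Fin 1)) := {fI M} with hs1
  set s2 : Finset (Lcas.Formula (M ⊕ Fin 1)) :=
    (Finset.range t).image (fun n => (fIn M n).not) with hs2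
  set s3 : Finset (Lcas.Formula (M ⊕ Fin 1)) :=
    (Cfin.filter (· ∈ IM M)).image (fun c => fNe c) with hs3
  set s4 : Finset (Lcas.Formula (M ⊕ Fin 1)) :=
    (Cfin.filter (· ∈ A)).image (fun c => fRleft c) with hs4
  set s5 : Finset (Lcas.Formula (M ⊕ Fin 1)) :=
    (Cfin.filter (fun c => c ∈ PM M ∧ c ∉ A)).image (fun c => (fRleft c).not) with hs5
  refine ⟨s1 ∪ s2 ∪ s3 ∪ s4 ∪ s5, ?_, ?_⟩
  · intro χ hχ
    rw [Finset.coe_union, Finset.coe_union, Finset.coe_union, Finset.coe_union] at hχ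
    rcases hχ with ((((hχ | hχ) | hχ) | hχ) | hχ)
    · rw [Finset.mem_coe, hs1, Finset.mem_singleton] at hχ
      exact hχ ▸ typeA_mem_fI
    · rw [Finset.mem_coe, hs2, Finset.mem_image] at hχ
      obtain ⟨n, _, rfl⟩ := hχ
      exact typeA_mem_fIn n
    · rw [Finset.mem_coe, hs3, Finset.mem_image] at hχ
      obtain ⟨c, hc, rfl⟩ := hχ
      exact typeA_mem_fNe (Finset.mem_filter.mp hc).2
    · rw [Finset.mem_coe, hs4, Finset.mem_image] at hχ
      obtain ⟨c, hc, rfl⟩ := hχ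
      exact typeA_mem_fR (Finset.mem_filter.mp hc).2
    · rw [Finset.mem_coe, hs5, Finset.mem_image] at hχ
      obtain ⟨c, hc, rfl⟩ := hχ
      exact typeA_mem_fRn ⟨(Finset.mem_filter.mp hc).2.1, (Finset.mem_filter.mp hc).2.2⟩
  · intro b b' hb hb'
    -- extract the basic facts about b and b'
    have hfI : fI M ∈ s1 ∪ s2 ∪ s3 ∪ s4 ∪ s5 :=
      Finset.mem_union_left _ (Finset.mem_union_left _ (Finset.mem_union_left _
        (Finset.mem_union_left _ (show fI M ∈ s1 by rw [hs1]; exact Finset.mem_singleton_self _))))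
    have hbI : b ∈ IM M := realizesAt_fI.mp (hb _ hfI)
    have hb'I : b' ∈ IM M := realizesAt_fI.mp (hb' _ hfI)
    have hbn : ∀ n, n < t → b ∉ InM M n ∧ b' ∉ InM M n := by
      intro n hn
      have hm2 : (fIn M n).not ∈ s2 := by
        rw [hs2]; exact Finset.mem_image.mpr ⟨n, Finset.mem_range.mpr hn, rfl⟩
      have hmem : (fIn M n).not ∈ s1 ∪ s2 ∪ s3 ∪ s4 ∪ s5 :=
        Finset.mem_union_left _ (Finset.mem_union_left _ (Finset.mem_union_left _
          (Finset.mem_union_right _ hm2)))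
      exact ⟨fun h => realizesAt_not.mp (hb _ hmem) (realizesAt_fIn.mpr h),
        fun h => realizesAt_not.mp (hb' _ hmem) (realizesAt_fIn.mpr h)⟩
    have hbne : ∀ c ∈ Cfin, b ≠ c ∧ b' ≠ c := by
      intro c hc
      by_cases hcI : c ∈ IM M
      · have hm3 : fNe c ∈ s3 := by
          rw [hs3]; exact Finset.mem_image.mpr ⟨c, Finset.mem_filter.mpr ⟨hc, hcI⟩, rfl⟩
        have hmem : fNe c ∈ s1 ∪ s2 ∪ s3 ∪ s4 ∪ s5 :=
          Finset.mem_union_left _ (Finset.mem_union_left _ (Finset.mem_union_right _ hm3))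
        exact ⟨realizesAt_fNe.mp (hb _ hmem), realizesAt_fNe.mp (hb' _ hmem)⟩
      · exact ⟨fun h => hcI (h ▸ hbI), fun h => hcI (h ▸ hb'I)⟩
    have hbR : ∀ c ∈ Cfin, (RM M c b ↔ RM M c b') := by
      intro c hc
      by_cases hcA : c ∈ A
      · have hm4 : fRleft c ∈ s4 := by
          rw [hs4]; exact Finset.mem_image.mpr ⟨c, Finset.mem_filter.mpr ⟨hc, hcA⟩, rfl⟩
        have hmem : fRleft c ∈ s1 ∪ s2 ∪ s3 ∪ s4 ∪ s5 :=
          Finset.mem_union_left _ (Finset.mem_union_right _ hm4)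
        exact iff_of_true (realizesAt_fRleft.mp (hb _ hmem)) (realizesAt_fRleft.mp (hb' _ hmem))
      · by_cases hcP : c ∈ PM M
        · have hm5 : (fRleft c).not ∈ s5 := by
            rw [hs5]; exact Finset.mem_image.mpr ⟨c, Finset.mem_filter.mpr ⟨hc, hcP, hcA⟩, rfl⟩
          have hmem : (fRleft c).not ∈ s1 ∪ s2 ∪ s3 ∪ s4 ∪ s5 :=
            Finset.mem_union_right _ hm5
          exact iff_of_false
            (fun h => realizesAt_not.mp (hb _ hmem) (realizesAt_fRleft.mpr h))
            (fun h => realizesAt_not.mp (hb' _ hmem) (realizesAt_fRleft.mpr h))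
        · exact iff_of_false (notR_left hM hcP) (notR_left hM hcP)
    -- the invariant on the starting configuration
    set v : ↥(↑(φ.freeVarFinset) : Set (M ⊕ Fin 1)) → M :=
      (Sum.elim id fun _ => b) ∘ (Subtype.val) with hv
    set v' : ↥(↑(φ.freeVarFinset) : Set (M ⊕ Fin 1)) → M :=
      (Sum.elim id fun _ => b') ∘ (Subtype.val) with hv'
    have hcase : ∀ i : ↥(↑(φ.freeVarFinset) : Set (M ⊕ Fin 1)) ⊕ Fin 0,
        (∃ m, m ∈ Cfin ∧ Sum.elim v (default : Fin 0 → M) i = m ∧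
          Sum.elim v' (default : Fin 0 → M) i = m) ∨
        (Sum.elim v (default : Fin 0 → M) i = b ∧ Sum.elim v' (default : Fin 0 → M) i = b') := by
      rintro (⟨(m | z), hy⟩ | i)
      · left
        refine ⟨m, ?_, ?_, ?_⟩
        · rw [hCfin]
          exact Finset.mem_image.mpr ⟨Sum.inl m, hy, rfl⟩
        · rw [hv]; rfl
        · rw [hv']; rfl
      · right
        exact ⟨by rw [hv]; rfl, by rw [hv']; rfl⟩
      · exact i.elim0
    have hinv : Inv t (Sum.elim v (default : Fin 0 → M)) (Sum.elim v' (default : Fin 0 → M)) :=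
      inv_start hM hbI hb'I hbn hbne hbR hcase
    -- apply the main transfer theorem
    have hvc : ∀ i, v i ∈ Cfin ∪ {b, b'} := by
      intro i
      rcases hcase (Sum.inl i) with ⟨m, hm, h1, _⟩ | ⟨h1, _⟩
      · rw [show v i = Sum.elim v (default : Fin 0 → M) (Sum.inl i) from rfl, h1]
        exact Finset.mem_union_left _ hm
      · rw [show v i = Sum.elim v (default : Fin 0 → M) (Sum.inl i) from rfl, h1]
        exact Finset.mem_union_right _ (by simp)
    have hv'c : ∀ i, v' i ∈ Cfin ∪ {b, b'} := by
      intro i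
      rcases hcase (Sum.inl i) with ⟨m, hm, _, h2⟩ | ⟨_, h2⟩
      · rw [show v' i = Sum.elim v' (default : Fin 0 → M) (Sum.inl i) from rfl, h2]
        exact Finset.mem_union_left _ hm
      · rw [show v' i = Sum.elim v' (default : Fin 0 → M) (Sum.inl i) from rfl, h2]
        exact Finset.mem_union_right _ (by simp)
    have hcard : (Cfin ∪ {b, b'}).card + 2 * qd ψ + 1 < t := by
      have h4 := Finset.card_union_le Cfin ({b, b'} : Finset M)
      have h5 : ({b, b'} : Finset M).card ≤ 2 := Finset.card_insert_le _ _ |>.trans (by simp)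
      omega
    have hgood : goodIdx t ψ := goodIdx_of_le ψ t (by omega)
    have hiff := main hM ψ t v v' default default (Cfin ∪ {b, b'}) hgood hvc hv'c
      (fun i => i.elim0) (fun i => i.elim0) hcard hinv
    have h1 := BoundedFormula.realize_restrictFreeVar' (M := M) hself
      (v := Sum.elim id fun _ => b) (xs := (default : Fin 0 → M))
    have h2 := BoundedFormula.realize_restrictFreeVar' (M := M) hself
      (v := Sum.elim id fun _ => b') (xs := (default : Fin 0 → M))
    rw [hψ, hv, hv'] at hiff
    exact (h1.symm.trans hiff).trans h2

end Core

end CasAux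

namespace CasAux

attribute [local instance] Classical.propDecidable Classical.decEq

section Final

variable {M : Type u} [Lcas.Structure M] (hM : IsTcasModel M)
include hM

theorem unique_ext {A : Set M} (hA : A ⊆ PM M) {q₁ q₂ : Set (Lcas.Formula (M ⊕ Fin 1))}
    (h₁ : IsCompleteTypeOver M q₁) (hs₁ : typeA A ⊆ q₁)
    (h₂ : IsCompleteTypeOver M q₂) (hs₂ : typeA A ⊆ q₂) : q₁ ⊆ q₂ := by
  intro φ hφ
  rcases complete_decides h₂ φ with h | h
  · exact h
  · exfalso
    obtain ⟨s, hs, hcore⟩ := core hM hA φ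
    obtain ⟨b, hb⟩ := h₁.1 (insert φ s) (by
      intro x hx
      rw [Finset.coe_insert, Set.mem_insert_iff] at hx
      rcases hx with rfl | hx
      · exact hφ
      · exact hs₁ (hs hx))
    obtain ⟨b', hb'⟩ := h₂.1 (insert φ.not s) (by
      intro x hx
      rw [Finset.coe_insert, Set.mem_insert_iff] at hx
      rcases hx with rfl | hx
      · exact h
      · exact hs₂ (hs hx))
    have hiff := hcore b b' (fun χ hχ => hb χ (Finset.mem_insert_of_mem hχ))
      (fun χ hχ => hb' χ (Finset.mem_insert_of_mem hχ))
    exact realizesAt_not.mp (hb' φ.not (Finset.mem_insert_self _ _))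
      (hiff.mp (hb φ (Finset.mem_insert_self _ _)))

theorem nonalg {A : Set M} (hA : A ⊆ PM M) {q : Set (Lcas.Formula (M ⊕ Fin 1))}
    (hq : IsCompleteTypeOver M q) (hsub : typeA A ⊆ q) : IsNonalgebraic M q := by
  intro c
  by_cases hc : c ∈ IM M
  · exact hsub (typeA_mem_fNe hc)
  · rcases complete_decides hq (fNe c) with h | h
    · exact h
    · exfalso
      obtain ⟨a, ha⟩ := hq.1 {fI M, (fNe c).not} (by
        intro x hx
        rw [Finset.coe_insert, Set.mem_insert_iff, Finset.coe_singleton,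
          Set.mem_singleton_iff] at hx
        rcases hx with rfl | rfl
        · exact hsub typeA_mem_fI
        · exact h)
      have haI : a ∈ IM M := realizesAt_fI.mp (ha _ (Finset.mem_insert_self _ _))
      have hac : a = c := by
        have h2 := realizesAt_not.mp
          (ha _ (Finset.mem_insert_of_mem (Finset.mem_singleton_self _)))
        by_contra hne
        exact h2 (realizesAt_fNe.mpr hne)
      exact hc (hac ▸ haI)

end Final

end CasAux

/-- for each `A ⊆ P^M`, `p_A` is finitely satisfiable in `M` and has a unique
extension to a complete 1-type over `M`, which is nonalgebraic; and every nonalgebraic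
complete 1-type over `M` containing `I(x)` and all `¬I_n(x)` arises this way from a
unique `A ⊆ P^M`. -/
theorem stmt7 (M : Type u) [Lcas.Structure M] (hM : IsTcasModel M) :
    (∀ A : Set M, A ⊆ PM M →
      FinSatIn M (typeA A) ∧
      (∃! q : Set (Lcas.Formula (M ⊕ Fin 1)), IsCompleteTypeOver M q ∧ typeA A ⊆ q) ∧
      (∀ q : Set (Lcas.Formula (M ⊕ Fin 1)), IsCompleteTypeOver M q → typeA A ⊆ q →
        IsNonalgebraic M q)) ∧
    ∀ q : Set (Lcas.Formula (M ⊕ Fin 1)), IsCompleteTypeOver M q → IsNonalgebraic M q →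
      fI M ∈ q → (∀ n : ℕ, (fIn M n).not ∈ q) →
      ∃! A : Set M, A ⊆ PM M ∧ typeA A ⊆ q := by
  constructor
  · intro A hA
    have hfs := CasAux.finSat_typeA hM hA
    refine ⟨hfs, ?_, ?_⟩
    · obtain ⟨q, hq, hsub⟩ := CasAux.exists_complete hM hfs
      refine ⟨q, ⟨hq, hsub⟩, ?_⟩
      rintro q' ⟨hq', hsub'⟩
      exact Set.Subset.antisymm (CasAux.unique_ext hM hA hq' hsub' hq hsub)
        (CasAux.unique_ext hM hA hq hsub hq' hsub')
    · intro q hq hsub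
      exact CasAux.nonalg hM hA hq hsub
  · intro q hq hnonalg hfImem hfInmem
    have hAP : {a : M | a ∈ PM M ∧ fRleft a ∈ q} ⊆ PM M := fun a ha => ha.1
    have hsub : typeA {a : M | a ∈ PM M ∧ fRleft a ∈ q} ⊆ q := by
      intro χ hχ
      rcases CasAux.typeA_cases hχ with hc | ⟨n, hc⟩ | ⟨c, hcI, hc⟩ | ⟨a, haA, hc⟩ | ⟨a, haA, hc⟩
      · rw [hc]; exact hfImem
      · rw [hc]; exact hfInmem n
      · rw [hc]; exact hnonalg c
      · rw [hc]; exact haA.2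
      · rw [hc]
        rcases CasAux.complete_decides hq (fRleft a) with h | h
        · exact absurd ⟨haA.1, h⟩ haA.2
        · exact h
    refine ⟨{a : M | a ∈ PM M ∧ fRleft a ∈ q}, ⟨hAP, hsub⟩, ?_⟩
    rintro A' ⟨hA'P, hsub'⟩
    ext a
    constructor
    · intro haA'
      exact ⟨hA'P haA', hsub' (CasAux.typeA_mem_fR haA')⟩
    · intro haA
      by_contra hna
      have hmem : (fRleft a).not ∈ q := hsub' (CasAux.typeA_mem_fRn ⟨haA.1, hna⟩)
      exact CasAux.finsat_not_both hq.1 haA.2 hmem
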